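/- Fix n ≥ 3 and let eval map a word w : List (Fin n × Bool) to the ordered product in Equiv.Perm (Option (Fin n × ℕ)) of the shifts s_i (for letters (i, true)) and their inverses s_i⁻¹ (for letters (i, false)). Then the language L = {w : List (Fin n × Bool) | (eval w) none ≠ none} of all words moving the center of the star is a context-free language. -/

import Mathlib

/-- Modular successor on `Fin n`. -/
def fsucc {n : ℕ} (i : Fin n) : Fin n :=
  ⟨(i.val + 1) % n, Nat.mod_lt _ (Nat.lt_of_le_of_lt (Nat.zero_le _) i.isLt)⟩

lemma fsucc_ne {n : ℕ} (hn : 2 ≤ n) (i : Fin n) : fsucc i ≠ i := by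
  rcases Nat.lt_or_ge (i.val + 1) n with h | h
  · intro he
    have : (i.val + 1) % n = i.val := congrArg Fin.val he
    rw [Nat.mod_eq_of_lt h] at this
    omega
  · intro he
    have hi := i.isLt
    have hn1 : i.val + 1 = n := by omega
    have : (i.val + 1) % n = i.val := congrArg Fin.val he
    rw [hn1, Nat.mod_self] at this
    omega

/-- The underlying function of the shift `s_i` on the star `*^n` with center `none`. -/
def shiftFun {n : ℕ} (i : Fin n) : Option (Fin n × ℕ) → Option (Fin n × ℕ)
  | none => some (fsucc i, 0)
  | some (l, k) =>
      if l = i then (match k with | 0 => none | Nat.succ k' => some (i, k'))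
      else if l = fsucc i then some (fsucc i, k + 1)
      else some (l, k)

/-- The inverse of `shiftFun i`. -/
def shiftInvFun {n : ℕ} (i : Fin n) : Option (Fin n × ℕ) → Option (Fin n × ℕ)
  | none => some (i, 0)
  | some (l, k) =>
      if l = i then some (i, k + 1)
      else if l = fsucc i then (match k with | 0 => none | Nat.succ k' => some (fsucc i, k'))
      else some (l, k)

/-- The shift `s_i`, as a permutation of the star `*^n`. -/
def shift {n : ℕ} (hn : 2 ≤ n) (i : Fin n) : Equiv.Perm (Option (Fin n × ℕ)) where
  toFun := shiftFun i
  invFun := shiftInvFun i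
  left_inv := by
    have hs := fsucc_ne hn i
    rintro (_ | ⟨l, k⟩)
    · simp [shiftFun, shiftInvFun, hs]
    · by_cases hl : l = i
      · subst hl
        cases k with
        | zero => simp [shiftFun, shiftInvFun]
        | succ k' => simp [shiftFun, shiftInvFun]
      · by_cases hl2 : l = fsucc i
        · subst hl2; simp [shiftFun, shiftInvFun, hs]
        · simp [shiftFun, shiftInvFun, hl, hl2]
  right_inv := by
    have hs := fsucc_ne hn i
    rintro (_ | ⟨l, k⟩)
    · simp [shiftFun, shiftInvFun, hs]
    · by_cases hl : l = i
      · subst hl; simp [shiftFun, shiftInvFun]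
      · by_cases hl2 : l = fsucc i
        · subst hl2
          cases k with
          | zero => simp [shiftFun, shiftInvFun, hs]
          | succ k' => simp [shiftFun, shiftInvFun, hs]
        · simp [shiftFun, shiftInvFun, hl, hl2]

/-- Evaluation of a signed word over the alphabet `A` in the group `G`. -/
def evalWord {G A : Type*} [Group G] (f : A → G) (w : List (A × Bool)) : G :=
  (w.map fun p => if p.2 then f p.1 else (f p.1)⁻¹).prod

namespace StarCF

variable {n : ℕ}

/-- Entry/up ray of a letter. -/
def ray (a : Fin n × Bool) : Fin n := if a.2 then fsucc a.1 else a.1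

/-- Down ray of a letter. -/
def coray (a : Fin n × Bool) : Fin n := if a.2 then a.1 else fsucc a.1

lemma ray_ne_coray (hn : 2 ≤ n) (a : Fin n × Bool) : ray a ≠ coray a := by
  rcases a with ⟨i, b⟩
  cases b <;> simp [ray, coray, fsucc_ne hn i, (fsucc_ne hn i).symm]

/-- One step of the action of a letter. -/
def act (a : Fin n × Bool) (v : Option (Fin n × ℕ)) : Option (Fin n × ℕ) :=
  if a.2 then shiftFun a.1 v else shiftInvFun a.1 v

/-- Run a word left-to-right from a state. -/
def run (v : Option (Fin n × ℕ)) (w : List (Fin n × Bool)) : Option (Fin n × ℕ) :=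
  w.foldl (fun v a => act a v) v

@[simp] lemma run_nil (v : Option (Fin n × ℕ)) : run v ([] : List (Fin n × Bool)) = v := rfl

lemma run_cons (v : Option (Fin n × ℕ)) (a : Fin n × Bool) (w : List (Fin n × Bool)) :
    run v (a :: w) = run (act a v) w := rfl

lemma run_append (v : Option (Fin n × ℕ)) (w₁ w₂ : List (Fin n × Bool)) :
    run v (w₁ ++ w₂) = run (run v w₁) w₂ := List.foldl_append ..

lemma act_none (a : Fin n × Bool) : act a none = some (ray a, 0) := by
  rcases a with ⟨i, b⟩; cases b <;> rfl

lemma act_down (hn : 2 ≤ n) {a : Fin n × Bool} {l : Fin n} (h : coray a = l) (k : ℕ) :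
    act a (some (l, k)) = (match k with | 0 => none | Nat.succ k' => some (l, k')) := by
  rcases a with ⟨i, b⟩
  have hfs := fsucc_ne hn i
  cases b <;> simp only [coray, if_true, if_false, Bool.false_eq_true] at h <;> subst h <;>
    simp [act, shiftFun, shiftInvFun, hfs]

lemma act_up (hn : 2 ≤ n) {a : Fin n × Bool} {l : Fin n} (h : ray a = l) (k : ℕ) :
    act a (some (l, k)) = some (l, k + 1) := by
  rcases a with ⟨i, b⟩
  have hfs := fsucc_ne hn i
  cases b <;> simp only [ray, if_true, if_false, Bool.false_eq_true] at h <;> subst h <;>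
    simp [act, shiftFun, shiftInvFun, hfs]

lemma act_neutral {a : Fin n × Bool} {l : Fin n} (h : ray a ≠ l) (h2 : coray a ≠ l) (k : ℕ) :
    act a (some (l, k)) = some (l, k) := by
  rcases a with ⟨i, b⟩
  cases b <;>
    simp only [ray, coray, if_true, if_false, Bool.false_eq_true] at h h2 <;>
    simp [act, shiftFun, shiftInvFun, Ne.symm h, Ne.symm h2]

/-- The height walk on ray `l`, absorbing at `none` (death = the run leaves the ray). -/
def walk (l : Fin n) : ℕ → List (Fin n × Bool) → Option ℕ
  | h, [] => some h
  | h, a :: w =>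
      if coray a = l then (match h with | 0 => none | Nat.succ h' => walk l h' w)
      else if ray a = l then walk l (h+1) w
      else walk l h w

@[simp] lemma walk_nil (l : Fin n) (h : ℕ) : walk l h [] = some h := rfl

lemma walk_cons_down0 {a : Fin n × Bool} {l : Fin n} (hd : coray a = l)
    (w : List (Fin n × Bool)) : walk l 0 (a :: w) = none := by
  simp [walk, hd]

lemma walk_cons_down {a : Fin n × Bool} {l : Fin n} (hd : coray a = l)
    (h : ℕ) (w : List (Fin n × Bool)) : walk l (h+1) (a :: w) = walk l h w := by
  simp [walk, hd]

lemma walk_cons_up {a : Fin n × Bool} {l : Fin n} (hu : ray a = l) (hd : coray a ≠ l)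
    (h : ℕ) (w : List (Fin n × Bool)) : walk l h (a :: w) = walk l (h+1) w := by
  simp [walk, hu, hd]

lemma walk_cons_neutral {a : Fin n × Bool} {l : Fin n} (hu : ray a ≠ l) (hd : coray a ≠ l)
    (h : ℕ) (w : List (Fin n × Bool)) : walk l h (a :: w) = walk l h w := by
  simp [walk, hu, hd]

lemma walk_append (l : Fin n) (w₁ w₂ : List (Fin n × Bool)) (h : ℕ) :
    walk l h (w₁ ++ w₂) = (walk l h w₁).bind (fun k => walk l k w₂) := by
  induction w₁ generalizing h with
  | nil => simp
  | cons a w₁ ih =>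
      by_cases hd : coray a = l
      · cases h with
        | zero => rw [List.cons_append, walk_cons_down0 hd, walk_cons_down0 hd]; rfl
        | succ h' => rw [List.cons_append, walk_cons_down hd, walk_cons_down hd, ih]
      · by_cases hu : ray a = l
        · rw [List.cons_append, walk_cons_up hu hd, walk_cons_up hu hd, ih]
        · rw [List.cons_append, walk_cons_neutral hu hd, walk_cons_neutral hu hd, ih]

lemma walk_take_ne_none {l : Fin n} {h : ℕ} {w : List (Fin n × Bool)}
    (hw : walk l h w ≠ none) (m : ℕ) : walk l h (w.take m) ≠ none := by
  intro hnone
  apply hw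
  rw [← List.take_append_drop m w, walk_append, hnone]
  rfl

/-- Translation upwards. -/
lemma walk_succ {l : Fin n} {w : List (Fin n × Bool)} {h k : ℕ}
    (hw : walk l h w = some k) : walk l (h+1) w = some (k+1) := by
  induction w generalizing h with
  | nil => simp_all
  | cons a w ih =>
      by_cases hd : coray a = l
      · cases h with
        | zero => rw [walk_cons_down0 hd] at hw; exact absurd hw (by simp)
        | succ h' => rw [walk_cons_down hd] at hw ⊢; exact ih hw
      · by_cases hu : ray a = l
        · rw [walk_cons_up hu hd] at hw ⊢; exact ih hw
        · rw [walk_cons_neutral hu hd] at hw ⊢; exact ih hw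

/-- If the walk dies, some proper prefix reaches height 0. -/
lemma walk_death {l : Fin n} {w : List (Fin n × Bool)} {h : ℕ}
    (hw : walk l h w = none) : ∃ m < w.length, walk l h (w.take m) = some 0 := by
  induction w generalizing h with
  | nil => simp_all
  | cons a w ih =>
      by_cases hd : coray a = l
      · cases h with
        | zero => exact ⟨0, by simp, rfl⟩
        | succ h' =>
            rw [walk_cons_down hd] at hw
            obtain ⟨m, hm, h0⟩ := ih hw
            exact ⟨m + 1, by simpa using hm, by rw [List.take_succ_cons, walk_cons_down hd]; exact h0⟩
      · by_cases hu : ray a = l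
        · rw [walk_cons_up hu hd] at hw
          obtain ⟨m, hm, h0⟩ := ih hw
          exact ⟨m + 1, by simpa using hm, by rw [List.take_succ_cons, walk_cons_up hu hd]; exact h0⟩
        · rw [walk_cons_neutral hu hd] at hw
          obtain ⟨m, hm, h0⟩ := ih hw
          exact ⟨m + 1, by simpa using hm,
            by rw [List.take_succ_cons, walk_cons_neutral hu hd]; exact h0⟩

/-- Intermediate value: a ±1 walk from `h` ending at `k ≤ t ≤ h` passes through `t`. -/
lemma walk_reach {l : Fin n} {w : List (Fin n × Bool)} {h k t : ℕ}
    (hw : walk l h w = some k) (hkt : k ≤ t) (hth : t ≤ h) :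
    ∃ m ≤ w.length, walk l h (w.take m) = some t := by
  induction w generalizing h k with
  | nil =>
      simp only [walk_nil, Option.some.injEq] at hw
      exact ⟨0, by simp, by simp; omega⟩
  | cons a w ih =>
      rcases eq_or_lt_of_le hth with rfl | hlt
      · exact ⟨0, by simp, by simp⟩
      · by_cases hd : coray a = l
        · cases h with
          | zero => rw [walk_cons_down0 hd] at hw; exact absurd hw (by simp)
          | succ h' =>
              rw [walk_cons_down hd] at hw
              obtain ⟨m, hm, h0⟩ := ih hw hkt (by omega)
              exact ⟨m + 1, by simpa using hm,
                by rw [List.take_succ_cons, walk_cons_down hd]; exact h0⟩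
        · by_cases hu : ray a = l
          · rw [walk_cons_up hu hd] at hw
            obtain ⟨m, hm, h0⟩ := ih hw hkt (by omega)
            exact ⟨m + 1, by simpa using hm,
              by rw [List.take_succ_cons, walk_cons_up hu hd]; exact h0⟩
          · rw [walk_cons_neutral hu hd] at hw
            obtain ⟨m, hm, h0⟩ := ih hw hkt (by omega)
            exact ⟨m + 1, by simpa using hm,
              by rw [List.take_succ_cons, walk_cons_neutral hu hd]; exact h0⟩

end StarCF
namespace StarCF

variable {n : ℕ}

/-- A surviving walk determines the run. -/
lemma run_of_walk_some (hn : 2 ≤ n) {l : Fin n} {w : List (Fin n × Bool)} {h k : ℕ}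
    (hw : walk l h w = some k) : run (some (l, h)) w = some (l, k) := by
  induction w generalizing h with
  | nil => simp_all
  | cons a w ih =>
      by_cases hd : coray a = l
      · cases h with
        | zero => rw [walk_cons_down0 hd] at hw; exact absurd hw (by simp)
        | succ h' =>
            rw [walk_cons_down hd] at hw
            rw [run_cons, act_down hn hd]
            exact ih hw
      · by_cases hu : ray a = l
        · rw [walk_cons_up hu hd] at hw
          rw [run_cons, act_up hn hu]
          exact ih hw
        · rw [walk_cons_neutral hu hd] at hw
          rw [run_cons, act_neutral hu hd]
          exact ih hw

/-- If all proper prefixes of the walk survive and the walk dies at the end,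
then the run reaches the center exactly at the end. -/
lemma run_of_walk_none (hn : 2 ≤ n) {l : Fin n} {w : List (Fin n × Bool)} {h : ℕ}
    (hpre : ∀ m < w.length, walk l h (w.take m) ≠ none)
    (hw : walk l h w = none) : run (some (l, h)) w = none := by
  induction w generalizing h with
  | nil => simp_all
  | cons a w ih =>
      by_cases hd : coray a = l
      · cases h with
        | zero =>
            cases w with
            | nil => rw [run_cons, act_down hn hd]; rfl
            | cons b w' =>
                exfalso
                have := hpre 1 (by simp)
                rw [List.take_succ_cons, List.take_zero, walk_cons_down0 hd] at this
                exact this rfl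
        | succ h' =>
            rw [walk_cons_down hd] at hw
            rw [run_cons, act_down hn hd]
            exact ih (fun m hm => by
              have := hpre (m+1) (by simpa using hm)
              rwa [List.take_succ_cons, walk_cons_down hd] at this) hw
      · by_cases hu : ray a = l
        · rw [walk_cons_up hu hd] at hw
          rw [run_cons, act_up hn hu]
          exact ih (fun m hm => by
            have := hpre (m+1) (by simpa using hm)
            rwa [List.take_succ_cons, walk_cons_up hu hd] at this) hw
        · rw [walk_cons_neutral hu hd] at hw
          rw [run_cons, act_neutral hu hd]
          exact ih (fun m hm => by
            have := hpre (m+1) (by simpa using hm)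
            rwa [List.take_succ_cons, walk_cons_neutral hu hd] at this) hw

/-- If the run survives on all prefixes up to `m`, so does the walk. -/
lemma walk_take_ne_none_of_run (hn : 2 ≤ n) {l : Fin n} {w : List (Fin n × Bool)} {m : ℕ}
    (hrun : ∀ j ≤ m, run (some (l, 0)) (w.take j) ≠ none) :
    ∀ j ≤ m, walk l 0 (w.take j) ≠ none := by
  intro j hj hnone
  classical
  -- take the least prefix of `w` on which the walk dies
  have hex : ∃ j', walk l 0 (w.take j') = none := ⟨j, hnone⟩
  set j₀ := Nat.find hex with hj₀
  have hj₀w : walk l 0 (w.take j₀) = none := Nat.find_spec hex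
  have hj₀le : j₀ ≤ j := Nat.find_min' hex hnone
  have hj₀pre : ∀ m' < (w.take j₀).length, walk l 0 ((w.take j₀).take m') ≠ none := by
    intro m' hm'
    rw [List.take_take]
    have hlen : m' < j₀ := by
      rw [List.length_take] at hm'
      omega
    exact Nat.find_min hex (show min m' j₀ < j₀ by omega)
  have := run_of_walk_none hn hj₀pre hj₀w
  exact hrun j₀ (le_trans hj₀le hj) this

/-- If the run reaches the center exactly at the end, so claims the walk. -/
lemma walk_none_of_run (hn : 2 ≤ n) {l : Fin n} {w : List (Fin n × Bool)}
    (hrun : run (some (l, 0)) w = none) : walk l 0 w = none := by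
  cases hwalk : walk l 0 w with
  | none => rfl
  | some k => exact absurd (run_of_walk_some hn hwalk) (by simp [hrun])

end StarCF
deriving instance DecidableEq for Symbol
deriving instance DecidableEq for ContextFreeRule

namespace StarCF

/-- Nonterminals of the grammar. -/
inductive NT (n : ℕ) : Type
  | S : NT n
  | Z : NT n
  | M (l : Fin n) : NT n
  | R (l : Fin n) : NT n
  | P (l : Fin n) : NT n
deriving DecidableEq

variable {n : ℕ}

abbrev Rule (n : ℕ) := ContextFreeRule (Fin n × Bool) (NT n)

open Symbol in
/-- Rules of the grammar, for a given letter `a`. -/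
def letterRules (a : Fin n × Bool) : List (Rule n) :=
  [⟨.S, [nonterminal .Z, terminal a, nonterminal (.P (ray a))]⟩,
   ⟨.Z, [nonterminal .Z, terminal a, nonterminal (.R (ray a))]⟩,
   ⟨.R (coray a), [terminal a]⟩,
   ⟨.M (coray a), [terminal a]⟩,
   ⟨.R (ray a), [terminal a, nonterminal (.M (ray a)), nonterminal (.R (ray a))]⟩,
   ⟨.M (ray a), [terminal a, nonterminal (.M (ray a)), nonterminal (.M (ray a))]⟩,
   ⟨.P (ray a), [terminal a, nonterminal (.M (ray a)), nonterminal (.P (ray a))]⟩,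
   ⟨.P (ray a), [terminal a, nonterminal (.P (ray a))]⟩] ++
  ((List.finRange n).filter (fun l => ray a ≠ l ∧ coray a ≠ l)).flatMap (fun l =>
    [⟨.R l, [terminal a, nonterminal (.R l)]⟩,
     ⟨.M l, [terminal a, nonterminal (.M l)]⟩,
     ⟨.P l, [terminal a, nonterminal (.P l)]⟩])

def allLetters (n : ℕ) : List (Fin n × Bool) :=
  (List.finRange n).flatMap (fun i => [(i, true), (i, false)])

lemma mem_allLetters (a : Fin n × Bool) : a ∈ allLetters n := by
  rcases a with ⟨i, b⟩
  cases b <;> simp [allLetters]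

def ruleList (n : ℕ) : List (Rule n) :=
  [⟨.Z, []⟩] ++ (List.finRange n).map (fun l => ⟨.P l, []⟩) ++
    (allLetters n).flatMap letterRules

/-- The grammar. -/
def gram (n : ℕ) : ContextFreeGrammar (Fin n × Bool) :=
  ⟨NT n, .S, (ruleList n).toFinset⟩

/-- Semantics of the nonterminals. -/
def sem : NT n → Language (Fin n × Bool)
  | .S => {w | run none w ≠ none}
  | .Z => {w | run none w = none}
  | .M l => {w | walk l 1 w = some 0 ∧ ∀ m < w.length, walk l 1 (w.take m) ≠ some 0}
  | .R l => {w | walk l 0 w = none ∧ ∀ m < w.length, walk l 0 (w.take m) ≠ none}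
  | .P l => {w | walk l 0 w ≠ none}

end StarCF
namespace StarCF

section Generic

variable {T : Type} {N : Type}

/-- Interpretation of a symbol as a language, given semantics of nonterminals. -/
def symL (s : N → Language T) : Symbol T N → Language T
  | .terminal t => {[t]}
  | .nonterminal X => s X

/-- Interpretation of a sentential form as a language. -/
def sfL (s : N → Language T) (u : List (Symbol T N)) : Language T :=
  (u.map (symL s)).prod

lemma sfL_nil (s : N → Language T) : sfL s [] = 1 := rfl

lemma sfL_cons (s : N → Language T) (x : Symbol T N) (u : List (Symbol T N)) :
    sfL s (x :: u) = symL s x * sfL s u := by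
  simp [sfL]

lemma sfL_append (s : N → Language T) (u v : List (Symbol T N)) :
    sfL s (u ++ v) = sfL s u * sfL s v := by
  simp [sfL]

lemma lang_mul_mono {A A' B B' : Language T} (h1 : ∀ x ∈ A, x ∈ A') (h2 : ∀ x ∈ B, x ∈ B') :
    ∀ x ∈ A * B, x ∈ A' * B' := by
  intro x hx
  rw [Language.mem_mul] at hx ⊢
  obtain ⟨a, ha, b, hb, rfl⟩ := hx
  exact ⟨a, h1 a ha, b, h2 b hb, rfl⟩

lemma sfL_map_terminal (s : N → Language T) (w : List T) :
    sfL s (w.map Symbol.terminal) = {w} := by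
  induction w with
  | nil => rfl
  | cons a w ih =>
      rw [List.map_cons, sfL_cons, ih]
      ext x
      simp only [Language.mem_mul, symL, Set.mem_singleton_iff]
      constructor
      · rintro ⟨u, rfl, v, rfl, rfl⟩; rfl
      · rintro rfl; exact ⟨[a], rfl, w, rfl, rfl⟩

lemma sfL_singleton_nonterminal (s : N → Language T) (X : N) :
    sfL s [Symbol.nonterminal X] = s X := by
  rw [sfL_cons, sfL_nil, mul_one]; rfl

variable {g : ContextFreeGrammar.{0} T}

lemma produces_sfL_sub (s : g.NT → Language T)
    (hr : ∀ r ∈ g.rules, ∀ x ∈ sfL s r.output, x ∈ s r.input)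
    {u v : List (Symbol T g.NT)} (h : g.Produces u v) :
    ∀ x ∈ sfL s v, x ∈ sfL s u := by
  obtain ⟨r, hrg, hrw⟩ := h
  obtain ⟨p, q, rfl, rfl⟩ := hrw.exists_parts
  rw [sfL_append, sfL_append, sfL_append, sfL_append]
  refine lang_mul_mono (lang_mul_mono (fun x hx => hx) ?_) (fun x hx => hx)
  rw [sfL_singleton_nonterminal]
  exact hr r hrg

lemma derives_sfL_sub (s : g.NT → Language T)
    (hr : ∀ r ∈ g.rules, ∀ x ∈ sfL s r.output, x ∈ s r.input)
    {u v : List (Symbol T g.NT)} (h : g.Derives u v) :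
    ∀ x ∈ sfL s v, x ∈ sfL s u := by
  induction h with
  | refl => exact fun x hx => hx
  | tail _ hp ih => exact fun x hx => ih x (produces_sfL_sub s hr hp x hx)

lemma mem_sem_of_mem_language (s : g.NT → Language T)
    (hr : ∀ r ∈ g.rules, ∀ x ∈ sfL s r.output, x ∈ s r.input)
    {w : List T} (hw : w ∈ g.language) : w ∈ s g.initial := by
  have h := derives_sfL_sub s hr hw
  rw [sfL_map_terminal] at h
  have := h w rfl
  rwa [sfL_singleton_nonterminal] at this

/-- Glue for completeness: derivations of terminal words. -/
lemma derives_rule {r : ContextFreeRule T g.NT} (hr : r ∈ g.rules) :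
    g.Derives [Symbol.nonterminal r.input] r.output :=
  ContextFreeGrammar.Produces.single ⟨r, hr, ContextFreeRule.Rewrites.input_output⟩

end Generic

end StarCF
namespace StarCF

variable {n : ℕ}

lemma mem_sfL_nil {T N : Type} {s : N → Language T} {x : List T} :
    x ∈ sfL s ([] : List (Symbol T N)) ↔ x = [] := by
  rw [sfL_nil, Language.mem_one]

lemma mem_sfL_term_cons {T N : Type} {s : N → Language T} {x : List T} {t : T}
    {u : List (Symbol T N)} :
    x ∈ sfL s (Symbol.terminal t :: u) ↔ ∃ q ∈ sfL s u, t :: q = x := by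
  rw [sfL_cons, Language.mem_mul]
  constructor
  · rintro ⟨p, hp, q, hq, rfl⟩
    rw [show p = [t] from hp]
    exact ⟨q, hq, rfl⟩
  · rintro ⟨q, hq, rfl⟩
    exact ⟨[t], rfl, q, hq, rfl⟩

lemma mem_sfL_nt_cons {T N : Type} {s : N → Language T} {x : List T} {X : N}
    {u : List (Symbol T N)} :
    x ∈ sfL s (Symbol.nonterminal X :: u) ↔ ∃ p ∈ s X, ∃ q ∈ sfL s u, p ++ q = x := by
  rw [sfL_cons, Language.mem_mul]; rfl

lemma sem_S_mem {w : List (Fin n × Bool)} : w ∈ sem (n := n) NT.S ↔ run none w ≠ none := Iff.rfl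
lemma sem_Z_mem {w : List (Fin n × Bool)} : w ∈ sem (n := n) NT.Z ↔ run none w = none := Iff.rfl
lemma sem_M_mem {l : Fin n} {w : List (Fin n × Bool)} :
    w ∈ sem (NT.M l) ↔
      walk l 1 w = some 0 ∧ ∀ m < w.length, walk l 1 (w.take m) ≠ some 0 := Iff.rfl
lemma sem_R_mem {l : Fin n} {w : List (Fin n × Bool)} :
    w ∈ sem (NT.R l) ↔
      walk l 0 w = none ∧ ∀ m < w.length, walk l 0 (w.take m) ≠ none := Iff.rfl
lemma sem_P_mem {l : Fin n} {w : List (Fin n × Bool)} :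
    w ∈ sem (NT.P l) ↔ walk l 0 w ≠ none := Iff.rfl

/-- Prefixes of a first-return word do not die. -/
lemma msem_take_ne_none {l : Fin n} {u : List (Fin n × Bool)} (hu : u ∈ sem (NT.M l))
    {j : ℕ} (hj : j ≤ u.length) : walk l 1 (u.take j) ≠ none := by
  obtain ⟨h1, h2⟩ := hu
  rcases eq_or_lt_of_le hj with rfl | hjlt
  · rw [List.take_length, h1]; simp
  · intro hdead
    obtain ⟨m, hm, h0⟩ := walk_death hdead
    rw [List.take_take] at h0
    have hmj : m < j := by rw [List.length_take] at hm; omega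
    rw [min_eq_left hmj.le] at h0
    exact h2 m (by omega) h0

lemma prefix_cons_append_le {α : Type*} (a : α) (u v : List α) {j : ℕ} (hj : j ≤ u.length) :
    (a :: (u ++ v)).take (j + 1) = a :: u.take j := by
  rw [List.take_succ_cons, List.take_append_of_le_length hj]

lemma prefix_cons_append_ge {α : Type*} (a : α) (u v : List α) (j : ℕ) :
    (a :: (u ++ v)).take (u.length + j + 1) = a :: (u ++ v.take j) := by
  rw [List.take_succ_cons, List.take_length_add_append]

lemma rules_sound (hn : 2 ≤ n) :
    ∀ r ∈ ruleList n, ∀ x ∈ sfL (sem (n := n)) r.output, x ∈ sem r.input := by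
  have hrc : ∀ a : Fin n × Bool, coray a ≠ ray a := fun a => (ray_ne_coray hn a).symm
  intro r hr'
  rw [ruleList, List.append_assoc, List.mem_append] at hr'
  rcases hr' with h | h
  · rw [List.mem_singleton] at h
    subst h
    intro x hx
    rw [mem_sfL_nil] at hx
    subst hx
    rw [sem_Z_mem]
    rfl
  rw [List.mem_append] at h
  rcases h with h | h
  · obtain ⟨l, -, rfl⟩ := List.mem_map.mp h
    intro x hx
    rw [mem_sfL_nil] at hx
    subst hx
    rw [sem_P_mem]
    simp
  obtain ⟨a, -, h⟩ := List.mem_flatMap.mp h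
  rw [letterRules, List.mem_append] at h
  rcases h with h | h
  · simp only [List.mem_cons, List.not_mem_nil, or_false] at h
    rcases h with rfl | rfl | rfl | rfl | rfl | rfl | rfl | rfl
    · -- S → Z a P(ray a)
      intro x hx
      rw [mem_sfL_nt_cons] at hx
      obtain ⟨z, hz, x', hx', rfl⟩ := hx
      rw [mem_sfL_term_cons] at hx'
      obtain ⟨x'', hx'', rfl⟩ := hx'
      rw [mem_sfL_nt_cons] at hx''
      obtain ⟨p, hp, e, he, rfl⟩ := hx''
      rw [mem_sfL_nil] at he
      subst he
      rw [sem_Z_mem] at hz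
      rw [sem_P_mem] at hp
      show run none _ ≠ none
      rw [List.append_nil, run_append, hz, run_cons, act_none]
      cases hwp : walk (ray a) 0 p with
      | none => exact absurd hwp hp
      | some k => rw [run_of_walk_some hn hwp]; simp
    · -- Z → Z a R(ray a)
      intro x hx
      rw [mem_sfL_nt_cons] at hx
      obtain ⟨z, hz, x', hx', rfl⟩ := hx
      rw [mem_sfL_term_cons] at hx'
      obtain ⟨x'', hx'', rfl⟩ := hx'
      rw [mem_sfL_nt_cons] at hx''
      obtain ⟨p, hp, e, he, rfl⟩ := hx''
      rw [mem_sfL_nil] at he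
      subst he
      rw [sem_Z_mem] at hz
      rw [sem_R_mem] at hp
      show run none _ = none
      rw [List.append_nil, run_append, hz, run_cons, act_none]
      exact run_of_walk_none hn hp.2 hp.1
    · -- R(coray a) → a
      intro x hx
      rw [mem_sfL_term_cons] at hx
      obtain ⟨e, he, rfl⟩ := hx
      rw [mem_sfL_nil] at he
      subst he
      rw [sem_R_mem]
      refine ⟨walk_cons_down0 rfl _, ?_⟩
      intro m hm
      have hm0 : m = 0 := by simpa using hm
      subst hm0
      simp
    · -- M(coray a) → a
      intro x hx
      rw [mem_sfL_term_cons] at hx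
      obtain ⟨e, he, rfl⟩ := hx
      rw [mem_sfL_nil] at he
      subst he
      rw [sem_M_mem]
      refine ⟨by rw [walk_cons_down rfl]; rfl, ?_⟩
      intro m hm
      have hm0 : m = 0 := by simpa using hm
      subst hm0
      simp
    · -- R(ray a) → a M R
      intro x hx
      rw [mem_sfL_term_cons] at hx
      obtain ⟨x', hx', rfl⟩ := hx
      rw [mem_sfL_nt_cons] at hx'
      obtain ⟨u, hu, x'', hx'', rfl⟩ := hx'
      rw [mem_sfL_nt_cons] at hx''
      obtain ⟨v, hv, e, he, rfl⟩ := hx''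
      rw [mem_sfL_nil] at he
      subst he
      rw [sem_R_mem] at hv
      rw [sem_R_mem]
      rw [List.append_nil]
      constructor
      · rw [walk_cons_up rfl (hrc a), walk_append, hu.1]
        exact hv.1
      · intro m hm
        match m with
        | 0 => simp
        | (j+1) =>
            rcases le_or_gt j u.length with hj | hj
            · rw [prefix_cons_append_le a u v hj, walk_cons_up rfl (hrc a)]
              exact fun hc => msem_take_ne_none hu hj hc
            · obtain ⟨j', rfl⟩ : ∃ j', j = u.length + j' := ⟨j - u.length, by omega⟩
              rw [prefix_cons_append_ge a u v j', walk_cons_up rfl (hrc a),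
                walk_append, hu.1, Option.bind_some]
              refine hv.2 j' ?_
              simp only [List.length_cons, List.length_append] at hm
              omega
    · -- M(ray a) → a M M
      intro x hx
      rw [mem_sfL_term_cons] at hx
      obtain ⟨x', hx', rfl⟩ := hx
      rw [mem_sfL_nt_cons] at hx'
      obtain ⟨u, hu, x'', hx'', rfl⟩ := hx'
      rw [mem_sfL_nt_cons] at hx''
      obtain ⟨v, hv, e, he, rfl⟩ := hx''
      rw [mem_sfL_nil] at he
      subst he
      rw [sem_M_mem] at hv
      rw [sem_M_mem]
      rw [List.append_nil]
      constructor
      · rw [walk_cons_up rfl (hrc a), walk_append, walk_succ hu.1, Option.bind_some]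
        exact hv.1
      · intro m hm
        match m with
        | 0 => simp
        | (j+1) =>
            rcases le_or_gt j u.length with hj | hj
            · rw [prefix_cons_append_le a u v hj, walk_cons_up rfl (hrc a)]
              cases hwu : walk (ray a) 1 (u.take j) with
              | none => exact absurd hwu (msem_take_ne_none hu hj)
              | some k => rw [walk_succ hwu]; simp
            · obtain ⟨j', rfl⟩ : ∃ j', j = u.length + j' := ⟨j - u.length, by omega⟩
              rw [prefix_cons_append_ge a u v j', walk_cons_up rfl (hrc a),
                walk_append, walk_succ hu.1, Option.bind_some]
              refine hv.2 j' ?_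
              simp only [List.length_cons, List.length_append] at hm
              omega
    · -- P(ray a) → a M P
      intro x hx
      rw [mem_sfL_term_cons] at hx
      obtain ⟨x', hx', rfl⟩ := hx
      rw [mem_sfL_nt_cons] at hx'
      obtain ⟨u, hu, x'', hx'', rfl⟩ := hx'
      rw [mem_sfL_nt_cons] at hx''
      obtain ⟨v, hv, e, he, rfl⟩ := hx''
      rw [mem_sfL_nil] at he
      subst he
      rw [sem_P_mem] at hv
      rw [sem_P_mem]
      rw [List.append_nil]
      rw [walk_cons_up rfl (hrc a), walk_append, hu.1, Option.bind_some]
      exact hv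
    · -- P(ray a) → a P
      intro x hx
      rw [mem_sfL_term_cons] at hx
      obtain ⟨x', hx', rfl⟩ := hx
      rw [mem_sfL_nt_cons] at hx'
      obtain ⟨u, hu, e, he, rfl⟩ := hx'
      rw [mem_sfL_nil] at he
      subst he
      rw [sem_P_mem] at hu
      rw [sem_P_mem]
      rw [List.append_nil]
      rw [walk_cons_up rfl (hrc a)]
      cases hwu : walk (ray a) 0 u with
      | none => exact absurd hwu hu
      | some k => rw [walk_succ hwu]; simp
  · -- neutral rules
    obtain ⟨l, hl, h⟩ := List.mem_flatMap.mp h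
    rw [List.mem_filter] at hl
    have hl2 := hl.2
    simp only [decide_eq_true_eq] at hl2
    obtain ⟨hlr, hlc⟩ := hl2
    simp only [List.mem_cons, List.not_mem_nil, or_false] at h
    rcases h with rfl | rfl | rfl
    · -- R l → a R l
      intro x hx
      rw [mem_sfL_term_cons] at hx
      obtain ⟨x', hx', rfl⟩ := hx
      rw [mem_sfL_nt_cons] at hx'
      obtain ⟨u, hu, e, he, rfl⟩ := hx'
      rw [mem_sfL_nil] at he
      subst he
      rw [sem_R_mem] at hu
      rw [sem_R_mem]
      rw [List.append_nil]
      refine ⟨by rw [walk_cons_neutral hlr hlc]; exact hu.1, ?_⟩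
      intro m hm
      match m with
      | 0 => simp
      | (j+1) =>
          rw [List.take_succ_cons, walk_cons_neutral hlr hlc]
          refine hu.2 j ?_
          simp only [List.length_cons] at hm
          omega
    · -- M l → a M l
      intro x hx
      rw [mem_sfL_term_cons] at hx
      obtain ⟨x', hx', rfl⟩ := hx
      rw [mem_sfL_nt_cons] at hx'
      obtain ⟨u, hu, e, he, rfl⟩ := hx'
      rw [mem_sfL_nil] at he
      subst he
      rw [sem_M_mem] at hu
      rw [sem_M_mem]
      rw [List.append_nil]
      refine ⟨by rw [walk_cons_neutral hlr hlc]; exact hu.1, ?_⟩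
      intro m hm
      match m with
      | 0 => simp
      | (j+1) =>
          rw [List.take_succ_cons, walk_cons_neutral hlr hlc]
          refine hu.2 j ?_
          simp only [List.length_cons] at hm
          omega
    · -- P l → a P l
      intro x hx
      rw [mem_sfL_term_cons] at hx
      obtain ⟨x', hx', rfl⟩ := hx
      rw [mem_sfL_nt_cons] at hx'
      obtain ⟨u, hu, e, he, rfl⟩ := hx'
      rw [mem_sfL_nil] at he
      subst he
      rw [sem_P_mem] at hu
      rw [sem_P_mem]
      rw [List.append_nil]
      rw [walk_cons_neutral hlr hlc]
      exact hu

end StarCF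
namespace StarCF

variable {n : ℕ}

open Symbol

/-! ### Rule membership -/

lemma mem_gram {r : Rule n} (h : r ∈ ruleList n) : r ∈ (gram n).rules :=
  List.mem_toFinset.mpr h

lemma znil_mem : (⟨NT.Z, []⟩ : Rule n) ∈ ruleList n := by
  rw [ruleList]
  exact List.mem_append.mpr (Or.inl (List.mem_append.mpr (Or.inl (List.mem_singleton.mpr rfl))))

lemma pnil_mem (l : Fin n) : (⟨NT.P l, []⟩ : Rule n) ∈ ruleList n := by
  rw [ruleList]
  exact List.mem_append.mpr (Or.inl (List.mem_append.mpr (Or.inr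
    (List.mem_map.mpr ⟨l, List.mem_finRange l, rfl⟩))))

lemma letterRule_mem (a : Fin n × Bool) {r : Rule n} (h : r ∈ letterRules a) :
    r ∈ ruleList n := by
  rw [ruleList]
  exact List.mem_append.mpr (Or.inr (List.mem_flatMap.mpr ⟨a, mem_allLetters a, h⟩))

lemma sRule_mem (a : Fin n × Bool) :
    (⟨NT.S, [nonterminal NT.Z, terminal a, nonterminal (NT.P (ray a))]⟩ : Rule n) ∈ ruleList n :=
  letterRule_mem a (by simp [letterRules])

lemma zRule_mem (a : Fin n × Bool) :
    (⟨NT.Z, [nonterminal NT.Z, terminal a, nonterminal (NT.R (ray a))]⟩ : Rule n) ∈ ruleList n :=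
  letterRule_mem a (by simp [letterRules])

lemma dR_mem (a : Fin n × Bool) :
    (⟨NT.R (coray a), [terminal a]⟩ : Rule n) ∈ ruleList n :=
  letterRule_mem a (by simp [letterRules])

lemma dM_mem (a : Fin n × Bool) :
    (⟨NT.M (coray a), [terminal a]⟩ : Rule n) ∈ ruleList n :=
  letterRule_mem a (by simp [letterRules])

lemma uR_mem (a : Fin n × Bool) :
    (⟨NT.R (ray a), [terminal a, nonterminal (NT.M (ray a)), nonterminal (NT.R (ray a))]⟩ :
      Rule n) ∈ ruleList n :=
  letterRule_mem a (by simp [letterRules])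

lemma uM_mem (a : Fin n × Bool) :
    (⟨NT.M (ray a), [terminal a, nonterminal (NT.M (ray a)), nonterminal (NT.M (ray a))]⟩ :
      Rule n) ∈ ruleList n :=
  letterRule_mem a (by simp [letterRules])

lemma uP_mem (a : Fin n × Bool) :
    (⟨NT.P (ray a), [terminal a, nonterminal (NT.M (ray a)), nonterminal (NT.P (ray a))]⟩ :
      Rule n) ∈ ruleList n :=
  letterRule_mem a (by simp [letterRules])

lemma uP2_mem (a : Fin n × Bool) :
    (⟨NT.P (ray a), [terminal a, nonterminal (NT.P (ray a))]⟩ : Rule n) ∈ ruleList n :=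
  letterRule_mem a (by simp [letterRules])

lemma neutral_mem_aux {a : Fin n × Bool} {l : Fin n} (h1 : ray a ≠ l) (h2 : coray a ≠ l)
    {r : Rule n}
    (hr : r ∈ [(⟨NT.R l, [terminal a, nonterminal (NT.R l)]⟩ : Rule n),
      ⟨NT.M l, [terminal a, nonterminal (NT.M l)]⟩,
      ⟨NT.P l, [terminal a, nonterminal (NT.P l)]⟩]) : r ∈ ruleList n := by
  refine letterRule_mem a ?_
  rw [letterRules]
  refine List.mem_append.mpr (Or.inr (List.mem_flatMap.mpr ⟨l, ?_, hr⟩))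
  rw [List.mem_filter]
  exact ⟨List.mem_finRange l, by simp [h1, h2]⟩

lemma nR_mem {a : Fin n × Bool} {l : Fin n} (h1 : ray a ≠ l) (h2 : coray a ≠ l) :
    (⟨NT.R l, [terminal a, nonterminal (NT.R l)]⟩ : Rule n) ∈ ruleList n :=
  neutral_mem_aux h1 h2 (by simp)

lemma nM_mem {a : Fin n × Bool} {l : Fin n} (h1 : ray a ≠ l) (h2 : coray a ≠ l) :
    (⟨NT.M l, [terminal a, nonterminal (NT.M l)]⟩ : Rule n) ∈ ruleList n :=
  neutral_mem_aux h1 h2 (by simp)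

lemma nP_mem {a : Fin n × Bool} {l : Fin n} (h1 : ray a ≠ l) (h2 : coray a ≠ l) :
    (⟨NT.P l, [terminal a, nonterminal (NT.P l)]⟩ : Rule n) ∈ ruleList n :=
  neutral_mem_aux h1 h2 (by simp)

/-! ### Derivation glue -/

section Glue

variable {T : Type} {g : ContextFreeGrammar.{0} T}

lemma glue_t (a : T) {X : g.NT} (hr : (⟨X, [terminal a]⟩ : ContextFreeRule T g.NT) ∈ g.rules) :
    g.Derives [nonterminal X] ([a].map terminal) :=
  derives_rule hr

lemma glue_t_nt {a : T} {X Y : g.NT} {u : List T}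
    (hr : (⟨X, [terminal a, nonterminal Y]⟩ : ContextFreeRule T g.NT) ∈ g.rules)
    (hu : g.Derives [nonterminal Y] (u.map terminal)) :
    g.Derives [nonterminal X] ((a :: u).map terminal) := by
  refine (derives_rule hr).trans ?_
  have := hu.append_left [terminal a]
  simpa using this

lemma glue_t_nt_nt {a : T} {X Y Z' : g.NT} {u v : List T}
    (hr : (⟨X, [terminal a, nonterminal Y, nonterminal Z']⟩ :
      ContextFreeRule T g.NT) ∈ g.rules)
    (hu : g.Derives [nonterminal Y] (u.map terminal))
    (hv : g.Derives [nonterminal Z'] (v.map terminal)) :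
    g.Derives [nonterminal X] ((a :: (u ++ v)).map terminal) := by
  refine (derives_rule hr).trans ?_
  have h1 : g.Derives ([terminal a] ++ [nonterminal Y] ++ [nonterminal Z'])
      ([terminal a] ++ u.map terminal ++ [nonterminal Z']) :=
    (hu.append_left _).append_right _
  have h2 : g.Derives ([terminal a] ++ u.map terminal ++ [nonterminal Z'])
      ([terminal a] ++ u.map terminal ++ v.map terminal) :=
    hv.append_left _
  have h3 := h1.trans h2
  have e1 : [terminal (N := g.NT) a] ++ [nonterminal Y] ++ [nonterminal Z'] =
      [terminal a, nonterminal Y, nonterminal Z'] := by simp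
  have e2 : [terminal (N := g.NT) a] ++ u.map terminal ++ v.map terminal =
      (a :: (u ++ v)).map terminal := by simp
  rwa [e1, e2] at h3

lemma glue_nt_t_nt {a : T} {X Y Z' : g.NT} {z v : List T}
    (hr : (⟨X, [nonterminal Y, terminal a, nonterminal Z']⟩ :
      ContextFreeRule T g.NT) ∈ g.rules)
    (hz : g.Derives [nonterminal Y] (z.map terminal))
    (hv : g.Derives [nonterminal Z'] (v.map terminal)) :
    g.Derives [nonterminal X] ((z ++ a :: v).map terminal) := by
  refine (derives_rule hr).trans ?_
  have h1 : g.Derives ([nonterminal Y] ++ [terminal a] ++ [nonterminal Z'])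
      (z.map terminal ++ [terminal a] ++ [nonterminal Z']) :=
    (hz.append_right _).append_right _
  have h2 : g.Derives (z.map terminal ++ [terminal a] ++ [nonterminal Z'])
      (z.map terminal ++ [terminal a] ++ v.map terminal) :=
    hv.append_left _
  have h3 := h1.trans h2
  have e1 : [nonterminal (T := T) Y] ++ [terminal a] ++ [nonterminal Z'] =
      [nonterminal Y, terminal a, nonterminal Z'] := by simp
  have e2 : z.map terminal ++ [terminal (N := g.NT) a] ++ v.map terminal =
      (z ++ a :: v).map terminal := by simp
  rwa [e1, e2] at h3

lemma glue_nil {X : g.NT} (hr : (⟨X, []⟩ : ContextFreeRule T g.NT) ∈ g.rules) :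
    g.Derives [nonterminal X] (([] : List T).map terminal) :=
  derives_rule hr

end Glue

/-! ### Completeness -/

lemma compM (hn : 2 ≤ n) : ∀ (N : ℕ) (w : List (Fin n × Bool)), w.length ≤ N →
    ∀ (b : ℕ) (l : Fin n), walk l (b+1) w = some b →
    (∀ m < w.length, walk l (b+1) (w.take m) ≠ some b) →
    (gram n).Derives [nonterminal (NT.M l)] (w.map terminal) := by
  intro N
  induction N with
  | zero =>
      intro w hw b l hend _
      rw [List.length_eq_zero_iff.mp (Nat.le_zero.mp hw)] at hend
      simp at hend
  | succ N ih =>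
      intro w hw b l hend hpre
      match w with
      | [] => simp at hend
      | a :: w' =>
          rw [List.length_cons] at hw
          by_cases hd : coray a = l
          · rw [walk_cons_down hd] at hend
            match w' with
            | [] =>
                exact hd ▸ glue_t a (mem_gram (dM_mem a))
            | b' :: w'' =>
                exfalso
                refine hpre 1 (by simp) ?_
                rw [List.take_succ_cons, List.take_zero, walk_cons_down hd, walk_nil]
          · by_cases hu : ray a = l
            · rw [walk_cons_up hu hd] at hend
              obtain ⟨mw, hmw, hmw0⟩ := walk_reach hend (Nat.le_succ b) (by omega)
              classical
              have hex : ∃ m, walk l (b+1+1) (w'.take m) = some (b+1) := ⟨mw, hmw0⟩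
              set m₀ := Nat.find hex with hm₀def
              have hm₀ : walk l (b+1+1) (w'.take m₀) = some (b+1) := Nat.find_spec hex
              have hm₀le : m₀ ≤ w'.length := le_trans (Nat.find_min' hex hmw0) hmw
              set u := w'.take m₀ with hu_def
              set v := w'.drop m₀ with hv_def
              have hulen : u.length = m₀ := by
                rw [hu_def, List.length_take]; omega
              have hvlen : v.length = w'.length - m₀ := by rw [hv_def, List.length_drop]
              have huv : w' = u ++ v := (List.take_append_drop m₀ w').symm
              have hwalkv : walk l (b+1) v = some b := by
                have h := hend
                rw [huv, walk_append, hm₀, Option.bind_some] at h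
                exact h
              have hDu : (gram n).Derives [nonterminal (NT.M l)] (u.map terminal) := by
                refine ih u (by omega) (b+1) l hm₀ ?_
                intro j hj hbad
                rw [hulen] at hj
                rw [hu_def, List.take_take, min_eq_left hj.le] at hbad
                exact Nat.find_min hex hj hbad
              have hDv : (gram n).Derives [nonterminal (NT.M l)] (v.map terminal) := by
                refine ih v (by omega) b l hwalkv ?_
                intro j hj hbad
                have hjw : m₀ + j < w'.length := by omega
                refine hpre (m₀ + j + 1) (by simp; omega) ?_
                rw [List.take_succ_cons, walk_cons_up hu hd]
                rw [huv, ← hulen, List.take_length_add_append, walk_append, hm₀, Option.bind_some]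
                exact hbad
              rw [huv]
              exact glue_t_nt_nt (mem_gram (hu ▸ uM_mem a)) hDu hDv
            · rw [walk_cons_neutral hu hd] at hend
              refine glue_t_nt (mem_gram (nM_mem hu hd)) ?_
              refine ih w' (by omega) b l hend ?_
              intro j hj hbad
              refine hpre (j+1) (by simpa using hj) ?_
              rwa [List.take_succ_cons, walk_cons_neutral hu hd]

lemma compP (hn : 2 ≤ n) : ∀ (N : ℕ) (w : List (Fin n × Bool)), w.length ≤ N →
    ∀ (b : ℕ) (l : Fin n),
    (∀ m ≤ w.length, ∃ k, b ≤ k ∧ walk l b (w.take m) = some k) →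
    (gram n).Derives [nonterminal (NT.P l)] (w.map terminal) := by
  intro N
  induction N with
  | zero =>
      intro w hw b l _
      rw [List.length_eq_zero_iff.mp (Nat.le_zero.mp hw)]
      exact glue_nil (mem_gram (pnil_mem l))
  | succ N ih =>
      intro w hw b l hP
      match w with
      | [] => exact glue_nil (mem_gram (pnil_mem l))
      | a :: w' =>
          rw [List.length_cons] at hw
          by_cases hd : coray a = l
          · exfalso
            obtain ⟨k, hk, hwalk⟩ := hP 1 (by simp)
            rw [List.take_succ_cons, List.take_zero] at hwalk
            match b with
            | 0 => rw [walk_cons_down0 hd] at hwalk; exact absurd hwalk (by simp)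
            | (b'+1) =>
                rw [walk_cons_down hd, walk_nil] at hwalk
                simp only [Option.some.injEq] at hwalk
                omega
          · by_cases hu : ray a = l
            · have hP' : ∀ j ≤ w'.length, ∃ k, b ≤ k ∧ walk l (b+1) (w'.take j) = some k := by
                intro j hj
                obtain ⟨k, hk, hwalk⟩ := hP (j+1) (by simpa using hj)
                rw [List.take_succ_cons, walk_cons_up hu hd] at hwalk
                exact ⟨k, hk, hwalk⟩
              classical
              by_cases hex : ∃ j, j ≤ w'.length ∧ walk l (b+1) (w'.take j) = some b
              · set m₀ := Nat.find hex with hm₀def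
                have hm₀spec : m₀ ≤ w'.length ∧ walk l (b+1) (w'.take m₀) = some b :=
                  Nat.find_spec hex
                obtain ⟨hm₀le, hm₀⟩ := hm₀spec
                set u := w'.take m₀ with hu_def
                set v := w'.drop m₀ with hv_def
                have hulen : u.length = m₀ := by rw [hu_def, List.length_take]; omega
                have hvlen : v.length = w'.length - m₀ := by rw [hv_def, List.length_drop]
                have huv : w' = u ++ v := (List.take_append_drop m₀ w').symm
                have hDu : (gram n).Derives [nonterminal (NT.M l)] (u.map terminal) := by
                  refine compM hn u.length u le_rfl b l hm₀ ?_
                  intro j hj hbad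
                  rw [hulen] at hj
                  rw [hu_def, List.take_take, min_eq_left hj.le] at hbad
                  exact Nat.find_min hex hj ⟨by omega, hbad⟩
                have hDv : (gram n).Derives [nonterminal (NT.P l)] (v.map terminal) := by
                  refine ih v (by omega) b l ?_
                  intro j hj
                  obtain ⟨k, hk, hwalk⟩ := hP' (m₀ + j) (by omega)
                  refine ⟨k, hk, ?_⟩
                  rw [huv, ← hulen, List.take_length_add_append, walk_append, hm₀,
                    Option.bind_some] at hwalk
                  exact hwalk
                rw [huv]
                exact glue_t_nt_nt (mem_gram (hu ▸ uP_mem a)) hDu hDv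
              · push_neg at hex
                refine glue_t_nt (mem_gram (hu ▸ uP2_mem a)) ?_
                refine ih w' (by omega) (b+1) l ?_
                intro j hj
                obtain ⟨k, hk, hwalk⟩ := hP' j hj
                refine ⟨k, ?_, hwalk⟩
                rcases Nat.lt_or_ge b k with h | h
                · omega
                · exfalso
                  have hkb : k = b := by omega
                  subst hkb
                  exact hex j hj hwalk
            · refine glue_t_nt (mem_gram (nP_mem hu hd)) ?_
              refine ih w' (by omega) b l ?_
              intro j hj
              obtain ⟨k, hk, hwalk⟩ := hP (j+1) (by simpa using hj)
              rw [List.take_succ_cons, walk_cons_neutral hu hd] at hwalk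
              exact ⟨k, hk, hwalk⟩

lemma compR (hn : 2 ≤ n) : ∀ (N : ℕ) (w : List (Fin n × Bool)), w.length ≤ N →
    ∀ (l : Fin n), walk l 0 w = none →
    (∀ m < w.length, walk l 0 (w.take m) ≠ none) →
    (gram n).Derives [nonterminal (NT.R l)] (w.map terminal) := by
  intro N
  induction N with
  | zero =>
      intro w hw l hend _
      rw [List.length_eq_zero_iff.mp (Nat.le_zero.mp hw)] at hend
      simp at hend
  | succ N ih =>
      intro w hw l hend hpre
      match w with
      | [] => simp at hend
      | a :: w' =>
          rw [List.length_cons] at hw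
          by_cases hd : coray a = l
          · match w' with
            | [] => exact hd ▸ glue_t a (mem_gram (dR_mem a))
            | b' :: w'' =>
                exfalso
                refine hpre 1 (by simp) ?_
                rw [List.take_succ_cons, List.take_zero]
                exact walk_cons_down0 hd []
          · by_cases hu : ray a = l
            · rw [walk_cons_up hu hd] at hend
              obtain ⟨mw, hmw, hmw0⟩ := walk_death hend
              classical
              have hex : ∃ m, walk l 1 (w'.take m) = some 0 := ⟨mw, hmw0⟩
              set m₀ := Nat.find hex with hm₀def
              have hm₀ : walk l 1 (w'.take m₀) = some 0 := Nat.find_spec hex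
              have hm₀le : m₀ ≤ w'.length := le_trans (Nat.find_min' hex hmw0) hmw.le
              set u := w'.take m₀ with hu_def
              set v := w'.drop m₀ with hv_def
              have hulen : u.length = m₀ := by rw [hu_def, List.length_take]; omega
              have hvlen : v.length = w'.length - m₀ := by rw [hv_def, List.length_drop]
              have huv : w' = u ++ v := (List.take_append_drop m₀ w').symm
              have hwalkv : walk l 0 v = none := by
                have h := hend
                rw [huv, walk_append, hm₀, Option.bind_some] at h
                exact h
              have hDu : (gram n).Derives [nonterminal (NT.M l)] (u.map terminal) := by
                refine compM hn u.length u le_rfl 0 l hm₀ ?_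
                intro j hj hbad
                rw [hulen] at hj
                rw [hu_def, List.take_take, min_eq_left hj.le] at hbad
                exact Nat.find_min hex hj hbad
              have hDv : (gram n).Derives [nonterminal (NT.R l)] (v.map terminal) := by
                refine ih v (by omega) l hwalkv ?_
                intro j hj hbad
                have hjw : m₀ + j < w'.length := by omega
                refine hpre (m₀ + j + 1) (by simp; omega) ?_
                rw [List.take_succ_cons, walk_cons_up hu hd]
                rw [huv, ← hulen, List.take_length_add_append, walk_append, hm₀, Option.bind_some]
                exact hbad
              rw [huv]
              exact glue_t_nt_nt (mem_gram (hu ▸ uR_mem a)) hDu hDv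
            · rw [walk_cons_neutral hu hd] at hend
              refine glue_t_nt (mem_gram (nR_mem hu hd)) ?_
              refine ih w' (by omega) l hend ?_
              intro j hj hbad
              refine hpre (j+1) (by simpa using hj) ?_
              rwa [List.take_succ_cons, walk_cons_neutral hu hd]

end StarCF
namespace StarCF

variable {n : ℕ}

open Symbol

lemma split_lemma {w : List (Fin n × Bool)} {m₀ : ℕ} (hm₀lt : m₀ < w.length) :
    w = w.take m₀ ++ w[m₀] :: w.drop (m₀ + 1) := by
  conv_lhs => rw [← List.take_append_drop m₀ w]
  rw [List.drop_eq_getElem_cons hm₀lt]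

lemma run_entry {w : List (Fin n × Bool)} {m₀ : ℕ} (hm₀lt : m₀ < w.length)
    (hz : run none (w.take m₀) = none) :
    run none (w.take m₀ ++ [w[m₀]]) = some (ray w[m₀], 0) := by
  rw [run_append, hz, run_cons, act_none, run_nil]

lemma take_big {w : List (Fin n × Bool)} {m₀ : ℕ} (hm₀lt : m₀ < w.length) (j : ℕ) :
    w.take (m₀ + 1 + j) = (w.take m₀ ++ [w[m₀]]) ++ (w.drop (m₀ + 1)).take j := by
  have hlen : (w.take m₀ ++ [w[m₀]]).length = m₀ + 1 := by
    rw [List.length_append, List.length_take]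
    simp
    omega
  conv_lhs => rw [split_lemma hm₀lt]
  have hassoc : w.take m₀ ++ w[m₀] :: w.drop (m₀ + 1) =
      (w.take m₀ ++ [w[m₀]]) ++ w.drop (m₀ + 1) := by simp
  rw [hassoc, ← hlen, List.take_length_add_append]

lemma compZ (hn : 2 ≤ n) : ∀ (N : ℕ) (w : List (Fin n × Bool)), w.length ≤ N →
    run none w = none → (gram n).Derives [nonterminal NT.Z] (w.map terminal) := by
  intro N
  induction N with
  | zero =>
      intro w hw _
      rw [List.length_eq_zero_iff.mp (Nat.le_zero.mp hw)]
      exact glue_nil (mem_gram znil_mem)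
  | succ N ih =>
      intro w hw hw0
      rcases eq_or_ne w [] with rfl | hne
      · exact glue_nil (mem_gram znil_mem)
      · have hlen : 0 < w.length := List.length_pos_iff.mpr hne
        classical
        have hQ0 : run none (w.take 0) = none := rfl
        set m₀ := Nat.findGreatest (fun m => run none (w.take m) = none) (w.length - 1)
          with hm₀def
        have hm₀ : run none (w.take m₀) = none :=
          Nat.findGreatest_spec (P := fun m => run none (w.take m) = none)
            (Nat.zero_le _) hQ0
        have hm₀le : m₀ ≤ w.length - 1 := Nat.findGreatest_le _
        have hm₀lt : m₀ < w.length := by omega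
        set a := w[m₀] with hadef
        set z := w.take m₀ with hzdef
        set v := w.drop (m₀+1) with hvdef
        have hzlen : z.length = m₀ := by rw [hzdef, List.length_take]; omega
        have hvlen : v.length = w.length - (m₀+1) := by rw [hvdef, List.length_drop]
        have hsplit : w = z ++ a :: v := split_lemma hm₀lt
        have hentry : run none (z ++ [a]) = some (ray a, 0) := run_entry hm₀lt hm₀
        have hrend : run (some (ray a, 0)) v = none := by
          have h := hw0
          conv at h => rw [hsplit]
          rw [show z ++ a :: v = (z ++ [a]) ++ v by simp, run_append, hentry] at h
          exact h
        have hvne : v ≠ [] := by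
          intro hnil
          rw [hnil, run_nil] at hrend
          exact absurd hrend (by simp)
        have hvpos : 0 < v.length := List.length_pos_iff.mpr hvne
        have hpre : ∀ j < v.length, run (some (ray a, 0)) (v.take j) ≠ none := by
          intro j hj hc
          have hgr := Nat.findGreatest_is_greatest (n := w.length - 1)
            (P := fun m => run none (w.take m) = none)
            (show m₀ < m₀ + 1 + j by omega) (by omega)
          apply hgr
          show run none (w.take (m₀ + 1 + j)) = none
          rw [take_big hm₀lt j, run_append, hentry]
          exact hc
        have hRsem1 : ∀ j < v.length, walk (ray a) 0 (v.take j) ≠ none := by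
          intro j hj
          refine walk_take_ne_none_of_run hn (m := v.length - 1) ?_ j (by omega)
          intro j' hj'
          exact hpre j' (by omega)
        have hRsem0 : walk (ray a) 0 v = none := walk_none_of_run hn hrend
        have hDz : (gram n).Derives [nonterminal NT.Z] (z.map terminal) :=
          ih z (by omega) hm₀
        have hDv : (gram n).Derives [nonterminal (NT.R (ray a))] (v.map terminal) :=
          compR hn v.length v le_rfl (ray a) hRsem0 hRsem1
        rw [hsplit]
        exact glue_nt_t_nt (mem_gram (zRule_mem a)) hDz hDv

lemma compS (hn : 2 ≤ n) (w : List (Fin n × Bool)) (hw0 : run none w ≠ none) :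
    (gram n).Derives [nonterminal NT.S] (w.map terminal) := by
  have hne : w ≠ [] := by
    intro hnil
    rw [hnil, run_nil] at hw0
    exact hw0 rfl
  have hlen : 0 < w.length := List.length_pos_iff.mpr hne
  classical
  have hQ0 : run none (w.take 0) = none := rfl
  set m₀ := Nat.findGreatest (fun m => run none (w.take m) = none) (w.length - 1)
    with hm₀def
  have hm₀ : run none (w.take m₀) = none :=
    Nat.findGreatest_spec (P := fun m => run none (w.take m) = none)
      (Nat.zero_le _) hQ0
  have hm₀le : m₀ ≤ w.length - 1 := Nat.findGreatest_le _
  have hm₀lt : m₀ < w.length := by omega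
  set a := w[m₀] with hadef
  set z := w.take m₀ with hzdef
  set v := w.drop (m₀+1) with hvdef
  have hzlen : z.length = m₀ := by rw [hzdef, List.length_take]; omega
  have hvlen : v.length = w.length - (m₀+1) := by rw [hvdef, List.length_drop]
  have hsplit : w = z ++ a :: v := split_lemma hm₀lt
  have hentry : run none (z ++ [a]) = some (ray a, 0) := run_entry hm₀lt hm₀
  have hrend : run (some (ray a, 0)) v ≠ none := by
    intro hc
    apply hw0
    conv_lhs => rw [hsplit]
    rw [show z ++ a :: v = (z ++ [a]) ++ v by simp, run_append, hentry]
    exact hc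
  have hpre : ∀ j ≤ v.length, run (some (ray a, 0)) (v.take j) ≠ none := by
    intro j hj
    rcases eq_or_lt_of_le hj with rfl | hjlt
    · rw [List.take_length]
      exact hrend
    · intro hc
      have hgr := Nat.findGreatest_is_greatest (n := w.length - 1)
        (P := fun m => run none (w.take m) = none)
        (show m₀ < m₀ + 1 + j by omega) (by omega)
      apply hgr
      show run none (w.take (m₀ + 1 + j)) = none
      rw [take_big hm₀lt j, run_append, hentry]
      exact hc
  have hPsem : ∀ m ≤ v.length, ∃ k, 0 ≤ k ∧ walk (ray a) 0 (v.take m) = some k := by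
    intro m hm
    have hwne := walk_take_ne_none_of_run hn (m := v.length) hpre m hm
    cases hwk : walk (ray a) 0 (v.take m) with
    | none => exact absurd hwk hwne
    | some k => exact ⟨k, Nat.zero_le _, rfl⟩
  have hDz : (gram n).Derives [nonterminal NT.Z] (z.map terminal) :=
    compZ hn z.length z le_rfl hm₀
  have hDv : (gram n).Derives [nonterminal (NT.P (ray a))] (v.map terminal) :=
    compP hn v.length v le_rfl 0 (ray a) hPsem
  rw [hsplit]
  exact glue_nt_t_nt (mem_gram (sRule_mem a)) hDz hDv

lemma gram_language (hn : 2 ≤ n) :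
    (gram n).language = sem (n := n) NT.S := by
  ext w
  constructor
  · intro hw
    exact mem_sem_of_mem_language (g := gram n) sem
      (fun r hr => rules_sound hn r (List.mem_toFinset.mp hr)) hw
  · intro hw
    exact compS hn w hw

lemma evalWord_eq_run (hp : 2 ≤ n) (w : List (Fin n × Bool)) :
    (evalWord (fun i : Fin n => shift hp i) w) (none : Option (Fin n × ℕ)) =
      run none w.reverse := by
  have key : ∀ w : List (Fin n × Bool),
      (evalWord (fun i : Fin n => shift hp i) w) (none : Option (Fin n × ℕ)) =
        w.foldr (fun a v => act a v) none := by
    intro w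
    induction w with
  | nil => rfl
  | cons a w ihw =>
      rw [List.foldr_cons, ← ihw]
      have hprod : evalWord (fun i : Fin n => shift hp i) (a :: w) =
          (if a.2 then shift hp a.1 else (shift hp a.1)⁻¹) *
            evalWord (fun i : Fin n => shift hp i) w := by
        rw [evalWord, evalWord, List.map_cons, List.prod_cons]
      rw [hprod, Equiv.Perm.mul_apply]
      rcases a with ⟨i, b⟩
      cases b
      · show ((shift hp i)⁻¹) _ = act (i, false) _
        rfl
      · rfl
  rw [key w, run, List.foldl_reverse]

end StarCF

theorem language_moving_center_contextFree (n : ℕ) (hn : 3 ≤ n) :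
    Language.IsContextFree
      {w : List (Fin n × Bool) |
        (evalWord (fun i : Fin n => shift (by omega : 2 ≤ n) i) w)
          (none : Option (Fin n × ℕ)) ≠ none} := by
  have h2 : 2 ≤ n := by omega
  have heq : {w : List (Fin n × Bool) |
      (evalWord (fun i : Fin n => shift (by omega : 2 ≤ n) i) w)
        (none : Option (Fin n × ℕ)) ≠ none} = ((StarCF.gram n).language).reverse := by
    ext w
    show _ ↔ w.reverse ∈ (StarCF.gram n).language
    rw [StarCF.gram_language h2]
    have hiff : w.reverse ∈ StarCF.sem (n := n) StarCF.NT.S ↔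
        StarCF.run none w.reverse ≠ none := Iff.rfl
    rw [hiff, Set.mem_setOf_eq, StarCF.evalWord_eq_run h2 w]
  rw [heq]
  exact Language.IsContextFree.reverse ⟨StarCF.gram n, rfl⟩
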